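/- Let p > 2 and r odd. For g = [(1+π^{l'}x), (1+π^{l'}y)] ∈ K^{l'} a commutator with l' = (r−1)/2, one has g = 1 + π^{2l'}(xy − yx), the element h = 1 + (1/2)π^{2l'}(xy − yx) satisfies h² = g, and h lies in the center of K^{l'}. -/

import Mathlib

open IsLocalRing
open scoped commutatorElement

/-- The principal congruence subgroup `1 + J^i · M_N(R)` inside `GL_N(R)`,
for an ideal `J` of a commutative ring `R`. -/
def congrSubgroup (N : ℕ) (R : Type) [CommRing R] (J : Ideal R) (i : ℕ) :
    Subgroup (GL (Fin N) R) where
  carrier := {u | ∀ a b, ((u : Matrix (Fin N) (Fin N) R) - 1) a b ∈ J ^ i}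
  one_mem' := by intro a b; simp
  mul_mem' := by
    intro u v hu hv a b
    have h : ((↑(u * v) : Matrix (Fin N) (Fin N) R) - 1)
        = ((↑u : Matrix (Fin N) (Fin N) R) - 1) * ((↑v : Matrix (Fin N) (Fin N) R) - 1)
          + (((↑u : Matrix (Fin N) (Fin N) R) - 1) + ((↑v : Matrix (Fin N) (Fin N) R) - 1)) := by
      rw [Units.val_mul]; noncomm_ring
    rw [h, Matrix.add_apply, Matrix.add_apply]
    refine Ideal.add_mem _ ?_ (Ideal.add_mem _ (hu a b) (hv a b))
    rw [Matrix.mul_apply]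
    exact Ideal.sum_mem _ fun c _ => Ideal.mul_mem_left _ _ (hv c b)
  inv_mem' := by
    intro u hu a b
    have h : ((↑u⁻¹ : Matrix (Fin N) (Fin N) R) - 1)
        = -((↑u⁻¹ : Matrix (Fin N) (Fin N) R) * ((↑u : Matrix (Fin N) (Fin N) R) - 1)) := by
      have huu : (↑u⁻¹ : Matrix (Fin N) (Fin N) R) * (↑u : Matrix (Fin N) (Fin N) R) = 1 := by
        rw [← Units.val_mul, inv_mul_cancel, Units.val_one]
      noncomm_ring [huu]
    rw [h, Matrix.neg_apply, Matrix.mul_apply]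
    exact neg_mem (Ideal.sum_mem _ fun c _ => Ideal.mul_mem_left _ _ (hu c b))


section Aux

variable {R A : Type} [CommRing R] [Ring A] [Algebra R A]

private theorem alg1 (t : R) (x y : A) (h3 : t*t*t = 0) :
    (1 + t•x)*(1 + t•y) = (1 + (t*t)•(x*y - y*x)) * ((1 + t•y)*(1 + t•x)) := by
  simp only [mul_add, add_mul, one_mul, mul_one, smul_mul_assoc, mul_smul_comm, smul_smul,
    sub_mul, mul_sub, smul_sub]
  match_scalars <;>
    first
      | linear_combination h3
      | linear_combination -h3
      | linear_combination t*h3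
      | linear_combination -(t*h3)
      | ring

private theorem alg2 (t s : R) (c : A) (hs : s*s = 0) (h2 : s + s = t*t) :
    (1 + s•c)*(1 + s•c) = 1 + (t*t)•c := by
  simp only [mul_add, add_mul, one_mul, mul_one, smul_mul_assoc, mul_smul_comm, smul_smul]
  match_scalars <;> first | linear_combination h2 | linear_combination hs | ring

private theorem alg3 (s : R) (c D : A) (h1 : s•(c*D) = 0) (h2 : s•(D*c) = 0) :
    (1 + s•c)*(1 + D) = (1 + D)*(1 + s•c) := by
  simp only [mul_add, add_mul, mul_one, one_mul, smul_add, smul_mul_assoc, mul_smul_comm,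
    h1, h2, add_zero]
  abel

private theorem alg4 (t : R) (c : A) (h4 : (t*t)*(t*t) = 0) :
    (1 + (t*t)•c) * (1 - (t*t)•c) = 1 ∧ (1 - (t*t)•c) * (1 + (t*t)•c) = 1 := by
  constructor <;>
  · simp only [mul_add, add_mul, one_mul, mul_one, mul_sub, sub_mul, smul_add, smul_sub,
      smul_mul_assoc, mul_smul_comm, smul_smul, h4, zero_smul, neg_smul, one_smul, smul_neg]
    abel

end Aux

/-- Let `p > 2` and `r` odd, `l' = (r-1)/2`. For `u = 1 + π^{l'}x` and `v = 1 + π^{l'}y`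
in `K^{l'}`, the commutator `g = [u, v]` equals `1 + π^{2l'}(xy - yx)`, the element
`h = 1 + ½π^{2l'}(xy - yx)` satisfies `h² = g`, and `h` is central in `K^{l'}`. -/
theorem commutator_square_root_central
    (o : Type) [CommRing o] [IsDomain o] [IsDiscreteValuationRing o]
    [Finite (ResidueField o)] (N r : ℕ) (hN : 2 ≤ N) (hr : 2 ≤ r)
    (π : o) (hπ : maximalIdeal o = Ideal.span {π})
    (l' : ℕ) (hodd : 2 * l' + 1 = r) (hl' : 1 ≤ l')
    (half : o ⧸ (maximalIdeal o) ^ r) (hhalf : 2 * half = 1)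
    (x y : Matrix (Fin N) (Fin N) (o ⧸ (maximalIdeal o) ^ r))
    (u v : GL (Fin N) (o ⧸ (maximalIdeal o) ^ r))
    (hu : (u : Matrix (Fin N) (Fin N) (o ⧸ (maximalIdeal o) ^ r))
      = 1 + (Ideal.Quotient.mk ((maximalIdeal o) ^ r) π) ^ l' • x)
    (hv : (v : Matrix (Fin N) (Fin N) (o ⧸ (maximalIdeal o) ^ r))
      = 1 + (Ideal.Quotient.mk ((maximalIdeal o) ^ r) π) ^ l' • y) :
    ((⁅u, v⁆ : GL (Fin N) (o ⧸ (maximalIdeal o) ^ r)) :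
        Matrix (Fin N) (Fin N) (o ⧸ (maximalIdeal o) ^ r))
      = 1 + (Ideal.Quotient.mk ((maximalIdeal o) ^ r) π) ^ (2 * l') • (x * y - y * x) ∧
    (1 + (half * (Ideal.Quotient.mk ((maximalIdeal o) ^ r) π) ^ (2 * l')) • (x * y - y * x)) *
      (1 + (half * (Ideal.Quotient.mk ((maximalIdeal o) ^ r) π) ^ (2 * l')) • (x * y - y * x))
      = ((⁅u, v⁆ : GL (Fin N) (o ⧸ (maximalIdeal o) ^ r)) :
        Matrix (Fin N) (Fin N) (o ⧸ (maximalIdeal o) ^ r)) ∧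
    ∀ w ∈ congrSubgroup N _
        ((maximalIdeal o).map (Ideal.Quotient.mk ((maximalIdeal o) ^ r))) l',
      Commute
        (1 + (half * (Ideal.Quotient.mk ((maximalIdeal o) ^ r) π) ^ (2 * l')) • (x * y - y * x))
        ((w : GL (Fin N) (o ⧸ (maximalIdeal o) ^ r)) :
          Matrix (Fin N) (Fin N) (o ⧸ (maximalIdeal o) ^ r)) := by
  set πb : o ⧸ (maximalIdeal o) ^ r := Ideal.Quotient.mk ((maximalIdeal o) ^ r) π with hπb
  have hπr : πb ^ r = 0 := by
    rw [hπb, ← map_pow, Ideal.Quotient.eq_zero_iff_mem, hπ]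
    exact Ideal.pow_mem_pow (Ideal.mem_span_singleton_self π) r
  have hzero : ∀ k, r ≤ k → πb ^ k = 0 := by
    intro k hk
    rw [show k = (k - r) + r by omega, pow_add, hπr, mul_zero]
  have h3 : πb ^ l' * πb ^ l' * πb ^ l' = 0 := by
    calc πb ^ l' * πb ^ l' * πb ^ l' = πb ^ (3 * l') := by ring
    _ = 0 := hzero _ (by omega)
  have h4 : (πb ^ l' * πb ^ l') * (πb ^ l' * πb ^ l') = 0 := by
    calc (πb ^ l' * πb ^ l') * (πb ^ l' * πb ^ l') = πb ^ (4 * l') := by ring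
    _ = 0 := hzero _ (by omega)
  have h2l : πb ^ (2 * l') = πb ^ l' * πb ^ l' := by rw [two_mul, pow_add]
  set c : Matrix (Fin N) (Fin N) (o ⧸ (maximalIdeal o) ^ r) := x * y - y * x with hc
  have hkill : ∀ d : (o ⧸ (maximalIdeal o) ^ r),
      d ∈ ((maximalIdeal o).map (Ideal.Quotient.mk ((maximalIdeal o) ^ r))) ^ l' →
      πb ^ l' * πb ^ l' * d = 0 := by
    intro d hd
    have hml : (maximalIdeal o) ^ l' = Ideal.span {π ^ l'} := by
      rw [hπ, Ideal.span_singleton_pow]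
    rw [← Ideal.map_pow, hml, Ideal.map_span, Set.image_singleton,
      Ideal.mem_span_singleton] at hd
    obtain ⟨b, hb⟩ := hd
    have h30 : πb ^ (3 * l') = 0 := hzero _ (by omega)
    calc πb ^ l' * πb ^ l' * d = πb ^ (3 * l') * b := by rw [hb, map_pow, ← hπb]; ring
    _ = 0 := by rw [h30, zero_mul]
  set G : GL (Fin N) (o ⧸ (maximalIdeal o) ^ r) :=
    ⟨1 + (πb ^ l' * πb ^ l') • c, 1 - (πb ^ l' * πb ^ l') • c,
      (alg4 (πb ^ l') c h4).1, (alg4 (πb ^ l') c h4).2⟩ with hG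
  have keyM : (u : Matrix (Fin N) (Fin N) (o ⧸ (maximalIdeal o) ^ r)) * v
      = (1 + (πb ^ l' * πb ^ l') • c) * ((v : Matrix (Fin N) (Fin N) (o ⧸ (maximalIdeal o) ^ r)) * u) := by
    rw [hu, hv]; exact alg1 (πb ^ l') x y h3
  have keyU : u * v = G * (v * u) := by
    apply Units.ext
    simpa [Units.val_mul, hG] using keyM
  have hcommU : ⁅u, v⁆ = G := by
    rw [commutatorElement_def]
    calc u * v * u⁻¹ * v⁻¹ = (u * v) * (v * u)⁻¹ := by group
    _ = G * (v * u) * (v * u)⁻¹ := by rw [keyU]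
    _ = G := mul_inv_cancel_right _ _
  have hGval : ((⁅u, v⁆ : GL (Fin N) (o ⧸ (maximalIdeal o) ^ r)) : Matrix (Fin N) (Fin N) (o ⧸ (maximalIdeal o) ^ r))
      = 1 + (πb ^ l' * πb ^ l') • c := by rw [hcommU]
  set s : (o ⧸ (maximalIdeal o) ^ r) := half * πb ^ (2 * l') with hs
  have hss : s * s = 0 := by
    have h40 : πb ^ (4 * l') = 0 := hzero _ (by omega)
    calc s * s = half * half * πb ^ (4 * l') := by rw [hs]; ring
    _ = 0 := by rw [h40, mul_zero]
  have h2s : s + s = πb ^ l' * πb ^ l' := by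
    calc s + s = 2 * half * πb ^ (2 * l') := by rw [hs]; ring
    _ = πb ^ l' * πb ^ l' := by rw [hhalf, one_mul, h2l]
  refine ⟨by rw [hGval, h2l], ?_, ?_⟩
  · rw [hGval]
    exact alg2 (πb ^ l') s c hss h2s
  · intro w hw
    have hw' : ∀ a b, (((w : GL (Fin N) (o ⧸ (maximalIdeal o) ^ r)) : Matrix (Fin N) (Fin N) (o ⧸ (maximalIdeal o) ^ r)) - 1) a b ∈
        ((maximalIdeal o).map (Ideal.Quotient.mk ((maximalIdeal o) ^ r))) ^ l' := hw
    set W : Matrix (Fin N) (Fin N) (o ⧸ (maximalIdeal o) ^ r) := ((w : GL (Fin N) (o ⧸ (maximalIdeal o) ^ r)) : Matrix (Fin N) (Fin N) (o ⧸ (maximalIdeal o) ^ r))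
      with hW
    have hcD : s • (c * (W - 1)) = 0 := by
      ext a b
      simp only [Matrix.smul_apply, Matrix.mul_apply, Matrix.zero_apply, smul_eq_mul, Finset.mul_sum]
      refine Finset.sum_eq_zero fun k _ => ?_
      have hk := hkill ((W - 1) k b) (hw' k b)
      calc s * (c a k * (W - 1) k b)
          = half * c a k * (πb ^ l' * πb ^ l' * (W - 1) k b) := by rw [hs]; ring
      _ = 0 := by rw [hk, mul_zero]
    have hDc : s • ((W - 1) * c) = 0 := by
      ext a b
      simp only [Matrix.smul_apply, Matrix.mul_apply, Matrix.zero_apply, smul_eq_mul, Finset.mul_sum]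
      refine Finset.sum_eq_zero fun k _ => ?_
      have hk := hkill ((W - 1) a k) (hw' a k)
      calc s * ((W - 1) a k * c k b)
          = half * c k b * (πb ^ l' * πb ^ l' * (W - 1) a k) := by rw [hs]; ring
      _ = 0 := by rw [hk, mul_zero]
    show (1 + s • c) * W = W * (1 + s • c)
    rw [show W = 1 + (W - 1) by abel]
    exact alg3 s c (W - 1) hcD hDc
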